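/- Let f : ℝ → ℝ be 2π-periodic, p ∈ (0, 1/2), p' = (1−2p)/(2−3p), and define f'(x) = (1−p) f(x − π/3) + (1−p) f(x + π/3) + (2p−1) f(x − π). Then for all x, p' f'(x − π) + (1−p') f'(x − π/3) = p f(x) + (1−p) f(x − 2π/3). -/

import Mathlib

theorem nonidentifiability_two_pi_over_three (f : ℝ → ℝ) (p : ℝ)
    (hper : Function.Periodic f (2 * Real.pi))
    (hp : 0 < p) (hp2 : p < 1/2) :
    let p' := (1 - 2*p) / (2 - 3*p)
    let f' := fun x => (1 - p) * f (x - Real.pi/3) + (1 - p) * f (x + Real.pi/3)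
      + (2*p - 1) * f (x - Real.pi)
    ∀ x : ℝ, p' * f' (x - Real.pi) + (1 - p') * f' (x - Real.pi/3)
      = p * f x + (1 - p) * f (x - 2*Real.pi/3) := by
  intro p' f' x
  have hne : (2 - 3*p) ≠ 0 := by nlinarith
  have h1 : f (x - Real.pi - Real.pi/3) = f (x + 2*Real.pi/3) := by
    rw [show x - Real.pi - Real.pi/3 = (x + 2*Real.pi/3) - 2*Real.pi by ring,
      hper.sub_eq]
  have h2 : f (x - Real.pi + Real.pi/3) = f (x - 2*Real.pi/3) := by ring_nf
  have h3 : f (x - Real.pi - Real.pi) = f x := by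
    rw [show x - Real.pi - Real.pi = x - 2*Real.pi by ring, hper.sub_eq]
  have h4 : f (x - Real.pi/3 - Real.pi/3) = f (x - 2*Real.pi/3) := by ring_nf
  have h5 : f (x - Real.pi/3 + Real.pi/3) = f x := by ring_nf
  have h6 : f (x - Real.pi/3 - Real.pi) = f (x + 2*Real.pi/3) := by
    rw [show x - Real.pi/3 - Real.pi = (x + 2*Real.pi/3) - 2*Real.pi by ring,
      hper.sub_eq]
  simp only [f', p', h1, h2, h3, h4, h5, h6]
  have hinv : (2 - 3*p) * (2 - 3*p)⁻¹ = 1 := mul_inv_cancel₀ hne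
  linear_combination (1 - 2*p) * (f (x + 2*Real.pi/3) - f x) * hinv
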